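/- arXiv:1611.01781 — 2 statements merged into one kernel-verified Lean document; each statement's English description precedes it below -/
import Mathlib

section
/- For all η ∈ ℝ and all σ ≥ 0 and all t > 0, one has (η + σ/2)² + 2√α_s·σ + t·σ ≥ W_rel(η); moreover for fixed η the infimum over σ ≥ 0 of (η + σ/2)² + 2√α_s·σ equals W_rel(η). -/
theorem Wrel_relaxation (αs : ℝ) (hαs : 0 < αs) (W : ℝ → ℝ)
    (hW : ∀ η : ℝ, W η = if -2 * Real.sqrt αs ≤ η then η ^ 2
      else -4 * Real.sqrt αs * (Real.sqrt αs + η)) :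
    (∀ η σ t : ℝ, 0 ≤ σ → 0 < t →
      W η ≤ (η + σ / 2) ^ 2 + 2 * Real.sqrt αs * σ + t * σ) ∧
    (∀ η : ℝ, IsGLB {x : ℝ | ∃ σ : ℝ, 0 ≤ σ ∧
      x = (η + σ / 2) ^ 2 + 2 * Real.sqrt αs * σ} (W η)) := by
  set s := Real.sqrt αs with hsdef
  have hs : 0 ≤ s := Real.sqrt_nonneg _
  have key : ∀ η σ : ℝ, 0 ≤ σ → W η ≤ (η + σ / 2) ^ 2 + 2 * s * σ := by
    intro η σ hσ
    rw [hW]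
    split_ifs with h
    · nlinarith [sq_nonneg σ]
    · nlinarith [sq_nonneg (η + σ / 2 + 2 * s)]
  constructor
  · intro η σ t hσ ht
    have := key η σ hσ
    nlinarith
  · intro η
    constructor
    · rintro x ⟨σ, hσ, rfl⟩
      exact key η σ hσ
    · intro b hb
      by_cases h : -2 * s ≤ η
      · exact hb ⟨0, le_refl 0, by rw [hW, if_pos h]; ring⟩
      · refine hb ⟨-2 * η - 4 * s, by push_neg at h; linarith, ?_⟩
        rw [hW, if_neg h]; ring
end

section
/- For r ∈ (r_w, r_0), one has v_0(r)/r < -2√α_s, and on (0, r_w) one has v_0(r)/r > -2√α_s. Consequently, for any compact subinterval I ⊂ (r_w, r_0) there exists C₂ > 0 with v_0(r)/r + 2√α_s ≤ -2C₂ for all r ∈ I. -/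
theorem v0_strictly_wrinkled (αs r0 R rw : ℝ) (hr0 : 0 < r0) (hR : 0 < R)
    (hαs : 0 < αs) (hsmall : αs < (2 : ℝ) ^ (-8 : ℤ) * (r0 / R) ^ 4)
    (hrw : rw = (16 * Real.sqrt αs * r0 * R ^ 2) ^ ((1 : ℝ) / 3))
    (v0 : ℝ → ℝ)
    (hv0 : ∀ r : ℝ, v0 r = if r ≤ rw then
        -(3 / 16) * r ^ 3 / R ^ 2 +
          (2 * Real.sqrt αs * (r0 / rw - 1) + (1 / 16) * rw ^ 2 / R ^ 2) * r
      else
        -2 * Real.sqrt αs * r - (r ^ 3 - rw ^ 3) / (6 * R ^ 2) +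
          2 * Real.sqrt αs * r0 * Real.log (r / rw)) :
    (∀ r ∈ Set.Ioo rw r0, v0 r / r < -2 * Real.sqrt αs) ∧
    (∀ r ∈ Set.Ioo (0 : ℝ) rw, -2 * Real.sqrt αs < v0 r / r) ∧
    ∀ I : Set ℝ, IsCompact I → I ⊆ Set.Ioo rw r0 →
      ∃ C2 : ℝ, 0 < C2 ∧ ∀ r ∈ I, v0 r / r + 2 * Real.sqrt αs ≤ -2 * C2 := by
  have hs : 0 < Real.sqrt αs := Real.sqrt_pos.mpr hαs
  set s := Real.sqrt αs with hsdef
  have hs2 : s ^ 2 = αs := Real.sq_sqrt hαs.le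
  have hx : 0 < 16 * s * r0 * R ^ 2 := by positivity
  have hrwpos : 0 < rw := by rw [hrw]; positivity
  have hrw3 : rw ^ 3 = 16 * s * r0 * R ^ 2 := by
    rw [hrw, ← Real.rpow_natCast _ 3, ← Real.rpow_mul hx.le]
    norm_num
  have hq : 0 < r0 ^ 2 / (16 * R ^ 2) := by positivity
  have h1 : s ^ 2 < (r0 ^ 2 / (16 * R ^ 2)) ^ 2 := by
    rw [hs2]
    have he : (2 : ℝ) ^ (-8 : ℤ) * (r0 / R) ^ 4 = (r0 ^ 2 / (16 * R ^ 2)) ^ 2 := by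
      field_simp
      ring
    linarith [hsmall, he.ge, he.le]
  have hslt : s < r0 ^ 2 / (16 * R ^ 2) := lt_of_pow_lt_pow_left₀ 2 hq.le h1
  have hsR : 16 * s * R ^ 2 < r0 ^ 2 := by
    rw [lt_div_iff₀ (by positivity)] at hslt
    nlinarith
  have hrwlt : rw < r0 := by
    refine lt_of_pow_lt_pow_left₀ 3 hr0.le ?_
    rw [hrw3]
    nlinarith
  have part1 : ∀ r ∈ Set.Ioo rw r0, v0 r / r < -2 * s := by
    rintro r ⟨hr1, hr2⟩
    have hrpos : 0 < r := hrwpos.trans hr1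
    rw [hv0 r, if_neg (not_le.mpr hr1), div_lt_iff₀ hrpos]
    have hd : (1 : ℝ) < r / rw := (one_lt_div hrwpos).mpr hr1
    have hL : Real.log (r / rw) < r / rw - 1 :=
      Real.log_lt_sub_one_of_pos (by positivity) hd.ne'
    have hL2 : 2 * s * r0 * Real.log (r / rw) < 2 * s * r0 * (r / rw - 1) := by
      have := mul_lt_mul_of_pos_left hL (by positivity : (0:ℝ) < 2 * s * r0)
      linarith
    have hkey : 2 * s * r0 * (r / rw - 1) ≤ (r ^ 3 - rw ^ 3) / (6 * R ^ 2) := by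
      rw [show r / rw - 1 = (r - rw) / rw from by field_simp]
      rw [mul_div_assoc', div_le_div_iff₀ hrwpos (by positivity)]
      nlinarith [mul_nonneg (mul_nonneg hrwpos.le (sub_nonneg.2 hr1.le))
        (sq_nonneg (r + rw / 2)), sub_nonneg.2 hr1.le]
    linarith
  have part2 : ∀ r ∈ Set.Ioo (0 : ℝ) rw, -2 * s < v0 r / r := by
    rintro r ⟨hrpos, hrlt⟩
    have hform : v0 r / r + 2 * s = 3 * (rw ^ 2 - r ^ 2) / (16 * R ^ 2) := by
      rw [hv0 r, if_pos hrlt.le]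
      field_simp
      linear_combination (-2) * hrw3
    have hpos : 0 < 3 * (rw ^ 2 - r ^ 2) / (16 * R ^ 2) := by
      apply div_pos _ (by positivity)
      nlinarith
    linarith
  refine ⟨part1, part2, ?_⟩
  rintro I hIc hIsub
  rcases I.eq_empty_or_nonempty with h | hne
  · exact ⟨1, one_pos, by simp [h]⟩
  have hcont : ContinuousOn (fun r => v0 r / r + 2 * s) I := by
    apply ContinuousOn.congr
      (f := fun r => (-2 * s * r - (r ^ 3 - rw ^ 3) / (6 * R ^ 2) +
        2 * s * r0 * Real.log (r / rw)) / r + 2 * s)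
    · apply ContinuousOn.add _ continuousOn_const
      apply ContinuousOn.div
      · apply ContinuousOn.add (ContinuousOn.sub (by fun_prop) (by fun_prop))
        apply ContinuousOn.mul continuousOn_const
        apply ContinuousOn.log (by fun_prop)
        intro x hx
        have hx1 := (hIsub hx).1
        have : 0 < x := hrwpos.trans hx1
        positivity
      · fun_prop
      · intro x hx
        exact (hrwpos.trans (hIsub hx).1).ne'
    · intro x hx
      simp only [hv0 x, if_neg (not_le.mpr (hIsub hx).1)]
  obtain ⟨x0, hx0I, hmax⟩ := hIc.exists_isMaxOn hne hcont
  have hx0 : v0 x0 / x0 + 2 * s < 0 := by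
    have := part1 x0 (hIsub hx0I)
    linarith
  refine ⟨-(v0 x0 / x0 + 2 * s) / 2, by linarith, ?_⟩
  intro r hrI
  have hmr := isMaxOn_iff.mp hmax r hrI
  linarith
end
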